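/- Suppose SI_0 and SI_1 satisfy SI_0 = D + O(h^4) and SI_1 = D + O(h^4) for a common quantity D with D = O(h^2), and let ε = K·h^2 with K > 0. Then the WENO weights ω_s = α_s/(α_0+α_1), α_s = C_s/(ε+SI_s)^β (with C_0, C_1 > 0 constants summing to 1, β > 0), satisfy ω_s = C_s + O(h^2) as h → 0. -/

import Mathlib

lemma rpow_sub_le_aux (β : ℝ) (hβ : 0 < β) {a b : ℝ} (ha : 0 < a) (hab : a ≤ b)
    (hb2 : b ≤ 2 * a) :
    b ^ β - a ^ β ≤ β * 2 ^ β * a ^ β * ((b - a) / a) := by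
  have hb : 0 < b := lt_of_lt_of_le ha hab
  have hr1 : 1 ≤ b / a := (one_le_div ha).2 hab
  have hr0 : 0 < b / a := by linarith
  have hr2 : b / a ≤ 2 := (div_le_iff₀ ha).2 (by linarith)
  set r := b / a with hr
  -- r^β - 1 ≤ β * 2^β * (r - 1)
  have hlog : Real.log r ≤ r - 1 := Real.log_le_sub_one_of_pos hr0
  have hlognn : 0 ≤ Real.log r := Real.log_nonneg hr1
  have hrβ : r ^ β = Real.exp (β * Real.log r) := by
    rw [Real.rpow_def_of_pos hr0, mul_comm]
  have hrβ2 : r ^ β ≤ 2 ^ β := Real.rpow_le_rpow (le_of_lt hr0) hr2 hβ.le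
  set t := β * Real.log r with ht
  have htnn : 0 ≤ t := mul_nonneg hβ.le hlognn
  have hexp : Real.exp t - 1 ≤ t * Real.exp t := by
    have h1 : 1 - t ≤ Real.exp (-t) := by
      have := Real.add_one_le_exp (-t); linarith
    have h2 : Real.exp (-t) * Real.exp t = 1 := by
      rw [← Real.exp_add]; simp
    nlinarith [Real.exp_pos t, Real.exp_pos (-t)]
  have key : r ^ β - 1 ≤ β * 2 ^ β * (r - 1) := by
    rw [hrβ]
    calc Real.exp t - 1 ≤ t * Real.exp t := hexp
      _ = β * Real.log r * r ^ β := by rw [hrβ, ht]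
      _ ≤ β * (r - 1) * 2 ^ β := by
          have h0 : (0:ℝ) ≤ r ^ β := Real.rpow_nonneg (le_of_lt hr0) β
          nlinarith [mul_le_mul (mul_le_mul_of_nonneg_left hlog hβ.le) hrβ2 h0
            (mul_nonneg hβ.le (by linarith) : (0:ℝ) ≤ β * (r - 1))]
      _ = β * 2 ^ β * (r - 1) := by ring
  have haβ : (0:ℝ) < a ^ β := Real.rpow_pos_of_pos ha β
  have hbβ : b ^ β = a ^ β * r ^ β := by
    rw [hr, Real.div_rpow hb.le ha.le]
    field_simp
  have hrm1 : r - 1 = (b - a) / a := by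
    rw [hr]; field_simp
  calc b ^ β - a ^ β = a ^ β * (r ^ β - 1) := by rw [hbβ]; ring
    _ ≤ a ^ β * (β * 2 ^ β * (r - 1)) := by
        apply mul_le_mul_of_nonneg_left key haβ.le
    _ = β * 2 ^ β * a ^ β * ((b - a) / a) := by rw [hrm1]; ring

lemma weight_alg (c X Y : ℝ) (hX : 0 < X) (hY : 0 < Y) (hc0 : 0 < c) (hc1 : c < 1) :
    c / X / (c / X + (1 - c) / Y) - c = c * (1 - c) * (Y - X) / (c * Y + (1 - c) * X) ∧
    (1 - c) / Y / (c / X + (1 - c) / Y) - (1 - c)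
      = -(c * (1 - c) * (Y - X) / (c * Y + (1 - c) * X)) := by
  have hden : 0 < c / X + (1 - c) / Y := by
    have : 0 < 1 - c := by linarith
    positivity
  have hS : 0 < c * Y + (1 - c) * X := by
    have : 0 < 1 - c := by linarith
    positivity
  have hE : c / X + (1 - c) / Y = (c * Y + (1 - c) * X) / (X * Y) := by
    field_simp
  constructor
  · rw [hE, eq_div_iff hS.ne', div_div_eq_mul_div, sub_mul, div_mul_eq_mul_div, div_mul_eq_mul_div,
      mul_div_cancel_right₀ _ hS.ne']
    field_simp
    ring
  · rw [hE, neg_div', eq_div_iff hS.ne', div_div_eq_mul_div, sub_mul, div_mul_eq_mul_div, div_mul_eq_mul_div,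
      mul_div_cancel_right₀ _ hS.ne']
    field_simp
    ring

theorem stmt6 (C0 C1 β K A B : ℝ)
    (hC0 : 0 < C0) (hC1 : 0 < C1) (hsum : C0 + C1 = 1)
    (hβ : 0 < β) (hK : 0 < K) (hA : 0 ≤ A) (hB : 0 ≤ B)
    (SI0 SI1 D : ℝ → ℝ)
    (hSI0 : ∀ h : ℝ, 0 < h → 0 ≤ SI0 h)
    (hSI1 : ∀ h : ℝ, 0 < h → 0 ≤ SI1 h)
    (hD : ∀ h : ℝ, 0 < h → 0 ≤ D h)
    (hSI0D : ∀ h : ℝ, 0 < h → |SI0 h - D h| ≤ A * h ^ 4)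
    (hSI1D : ∀ h : ℝ, 0 < h → |SI1 h - D h| ≤ A * h ^ 4)
    (hDB : ∀ h : ℝ, 0 < h → D h ≤ B * h ^ 2) :
    ∃ M h0 : ℝ, 0 < h0 ∧ ∀ h : ℝ, 0 < h → h < h0 →
      |C0 / (K * h ^ 2 + SI0 h) ^ β /
          (C0 / (K * h ^ 2 + SI0 h) ^ β + C1 / (K * h ^ 2 + SI1 h) ^ β) - C0|
        ≤ M * h ^ 2 ∧
      |C1 / (K * h ^ 2 + SI1 h) ^ β /
          (C0 / (K * h ^ 2 + SI0 h) ^ β + C1 / (K * h ^ 2 + SI1 h) ^ β) - C1|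
        ≤ M * h ^ 2 := by
  refine ⟨C0 * C1 * β * 2 ^ β * (2 * A) / K, Real.sqrt (K / (2 * A + 1)), ?_, ?_⟩
  · apply Real.sqrt_pos.2
    positivity
  intro h hh hh0
  have hh2 : h ^ 2 < K / (2 * A + 1) := by
    have h1 : h ^ 2 < Real.sqrt (K / (2 * A + 1)) ^ 2 := by
      apply pow_lt_pow_left₀ hh0 hh.le
      norm_num
    rwa [Real.sq_sqrt (by positivity)] at h1
  have hAK : 2 * A * h ^ 2 < K := by
    rw [lt_div_iff₀ (by positivity)] at hh2
    nlinarith [sq_nonneg h]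
  set x := K * h ^ 2 + SI0 h with hxdef
  set y := K * h ^ 2 + SI1 h with hydef
  have hε : 0 < K * h ^ 2 := by positivity
  have hx : 0 < x := by have := hSI0 h hh; positivity
  have hy : 0 < y := by have := hSI1 h hh; positivity
  have hxy : |x - y| ≤ 2 * A * h ^ 4 := by
    have h1 := abs_le.1 (hSI0D h hh)
    have h2 := abs_le.1 (hSI1D h hh)
    rw [abs_le]
    constructor <;> simp only [hxdef, hydef] <;> [linarith [h1.1, h2.2]; linarith [h1.2, h2.1]]
  set a := min x y with hadef
  set b := max x y with hbdef
  have hab : a ≤ b := min_le_max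
  have ha : K * h ^ 2 ≤ a := le_min (by nlinarith [hSI0 h hh]) (by nlinarith [hSI1 h hh])
  have ha0 : 0 < a := lt_of_lt_of_le hε ha
  have hba : b - a ≤ 2 * A * h ^ 4 := by
    rcases le_total x y with hle | hle
    · rw [hadef, hbdef, min_eq_left hle, max_eq_right hle]
      rw [abs_sub_comm] at hxy
      linarith [abs_le.1 hxy]
    · rw [hadef, hbdef, min_eq_right hle, max_eq_left hle]
      linarith [abs_le.1 hxy]
  have hAh4 : 2 * A * h ^ 4 ≤ K * h ^ 2 := by nlinarith [sq_nonneg h, pow_pos hh 2]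
  have hb2 : b ≤ 2 * a := by linarith
  have hkey := rpow_sub_le_aux β hβ ha0 hab hb2
  have hdivle : (b - a) / a ≤ 2 * A * h ^ 4 / (K * h ^ 2) := by
    apply div_le_div₀ (by positivity) (by linarith) hε ha
  have hq : 2 * A * h ^ 4 / (K * h ^ 2) = 2 * A / K * h ^ 2 := by
    field_simp
  have haβ : (0:ℝ) < a ^ β := Real.rpow_pos_of_pos ha0 β
  have hxβ : (0:ℝ) < x ^ β := Real.rpow_pos_of_pos hx β
  have hyβ : (0:ℝ) < y ^ β := Real.rpow_pos_of_pos hy β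
  have habs : |y ^ β - x ^ β| ≤ β * 2 ^ β * a ^ β * (2 * A / K * h ^ 2) := by
    have hbound : b ^ β - a ^ β ≤ β * 2 ^ β * a ^ β * (2 * A / K * h ^ 2) := by
      calc b ^ β - a ^ β ≤ β * 2 ^ β * a ^ β * ((b - a) / a) := hkey
        _ ≤ β * 2 ^ β * a ^ β * (2 * A / K * h ^ 2) := by
            apply mul_le_mul_of_nonneg_left _ (by positivity)
            rw [← hq]; exact hdivle
    rcases le_total x y with hle | hle
    · have : a = x ∧ b = y := ⟨min_eq_left hle, max_eq_right hle⟩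
      rw [abs_of_nonneg (by
        have := Real.rpow_le_rpow hx.le hle hβ.le; linarith)]
      rw [← this.1, ← this.2]; exact hbound
    · have : a = y ∧ b = x := ⟨min_eq_right hle, max_eq_left hle⟩
      rw [abs_of_nonpos (by
        have := Real.rpow_le_rpow hy.le hle hβ.le; linarith)]
      rw [show -(y ^ β - x ^ β) = x ^ β - y ^ β by ring, ← this.1, ← this.2]; exact hbound
  set S := C0 * y ^ β + C1 * x ^ β with hSdef
  have hS : 0 < S := by positivity
  have hSa : a ^ β ≤ S := by
    have h1 : a ^ β ≤ x ^ β := Real.rpow_le_rpow ha0.le (min_le_left x y) hβ.le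
    have h2 : a ^ β ≤ y ^ β := Real.rpow_le_rpow ha0.le (min_le_right x y) hβ.le
    nlinarith
  have hden : 0 < C0 / x ^ β + C1 / y ^ β := by positivity
  have hC1' : C1 = 1 - C0 := by linarith
  have halg := weight_alg C0 (x ^ β) (y ^ β) hxβ hyβ hC0 (by linarith)
  rw [← hC1'] at halg
  have hE0 : C0 / x ^ β / (C0 / x ^ β + C1 / y ^ β) - C0 = C0 * C1 * (y ^ β - x ^ β) / S :=
    halg.1
  have hE1 : C1 / y ^ β / (C0 / x ^ β + C1 / y ^ β) - C1 = -(C0 * C1 * (y ^ β - x ^ β) / S) :=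
    halg.2
  have hbound : |C0 * C1 * (y ^ β - x ^ β) / S| ≤ C0 * C1 * β * 2 ^ β * (2 * A) / K * h ^ 2 := by
    rw [abs_div, abs_of_pos hS, abs_mul, abs_mul, abs_of_pos hC0, abs_of_pos hC1]
    rw [div_le_iff₀ hS]
    calc C0 * C1 * |y ^ β - x ^ β|
        ≤ C0 * C1 * (β * 2 ^ β * a ^ β * (2 * A / K * h ^ 2)) := by
          apply mul_le_mul_of_nonneg_left habs (by positivity)
      _ = C0 * C1 * β * 2 ^ β * (2 * A) / K * h ^ 2 * a ^ β := by ring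
      _ ≤ C0 * C1 * β * 2 ^ β * (2 * A) / K * h ^ 2 * S := by
          apply mul_le_mul_of_nonneg_left hSa (by positivity)
  constructor
  · rw [hE0]; exact hbound
  · rw [hE1, abs_neg]; exact hbound
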